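/- arXiv:1105.1987 — 13 statements merged into one kernel-verified Lean document; each statement's English description precedes it below -/
import Mathlib

section
/- If Λ > 0, M > 0, and 9M²Λ < 1, then the function V(r) = 1 - 2M/r - Λr²/3 has exactly two positive roots r_b < r_c with V(r) > 0 for all r in (r_b, r_c). -/
/-- For Λ > 0, M > 0, 9M²Λ < 1, the function V(r) = 1 - 2M/r - Λr²/3 has exactly
two positive roots r_b < r_c, with V > 0 on (r_b, r_c). -/
theorem stmt_0 (Λ M : ℝ) (hΛ : 0 < Λ) (hM : 0 < M) (h9 : 9 * M ^ 2 * Λ < 1)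
    (V : ℝ → ℝ) (hV : ∀ r, V r = 1 - 2 * M / r - Λ * r ^ 2 / 3) :
    ∃ r_b r_c : ℝ, 0 < r_b ∧ r_b < r_c ∧ V r_b = 0 ∧ V r_c = 0 ∧
      (∀ r, r_b < r → r < r_c → 0 < V r) ∧
      (∀ r, 0 < r → V r = 0 → r = r_b ∨ r = r_c) := by
  set P : ℝ → ℝ := fun r => Λ * r ^ 3 - 3 * r + 6 * M with hP
  have hPc : Continuous P := by fun_prop
  have hVP : ∀ r : ℝ, 0 < r → V r = -(P r) / (3 * r) := by
    intro r hr
    rw [hV, hP]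
    field_simp
    ring
  set s : ℝ := Real.sqrt Λ with hsdef
  have hs : 0 < s := Real.sqrt_pos.mpr hΛ
  have hΛs : Λ = s ^ 2 := (Real.sq_sqrt hΛ.le).symm
  have h3Ms : 3 * M * s < 1 := by nlinarith [mul_pos hM hs]
  have hP0 : P 0 = 6 * M := by simp [hP]
  have hPm : P (1 / s) < 0 := by
    have h1 : P (1 / s) = 6 * M - 2 / s := by
      simp only [hP, hΛs]; field_simp; ring
    rw [h1, sub_neg, lt_div_iff₀ hs]; linarith
  have hPb : 0 < P (2 / s) := by
    have h1 : P (2 / s) = 6 * M + 2 / s := by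
      simp only [hP, hΛs]; field_simp; ring
    rw [h1]; positivity
  obtain ⟨r_b, hrb_mem, hrb⟩ :=
    intermediate_value_Ioo' (by positivity : (0:ℝ) ≤ 1 / s) hPc.continuousOn
      (by rw [hP0]; exact ⟨hPm, by positivity⟩ : (0:ℝ) ∈ Set.Ioo (P (1/s)) (P 0))
  obtain ⟨r_c, hrc_mem, hrc⟩ :=
    intermediate_value_Ioo (by gcongr <;> norm_num : (1:ℝ) / s ≤ 2 / s) hPc.continuousOn
      (⟨hPm, hPb⟩ : (0:ℝ) ∈ Set.Ioo (P (1/s)) (P (2/s)))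
  obtain ⟨hb0, hb1⟩ := hrb_mem
  obtain ⟨hc1, hc2⟩ := hrc_mem
  have hbc : r_b < r_c := hb1.trans hc1
  have hc0 : 0 < r_c := hb0.trans hbc
  simp only [hP] at hrb hrc
  have hne : r_b - r_c ≠ 0 := sub_ne_zero.mpr (ne_of_lt hbc)
  have hsub : (r_b - r_c) * (Λ * (r_b ^ 2 + r_b * r_c + r_c ^ 2) - 3) = 0 := by
    linear_combination hrb - hrc
  have h1 : Λ * (r_b ^ 2 + r_b * r_c + r_c ^ 2) = 3 := by
    rcases mul_eq_zero.mp hsub with h | h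
    · exact absurd h hne
    · linarith
  have h2 : 6 * M = Λ * (r_b * r_c * (r_b + r_c)) := by
    linear_combination hrb - r_b * h1
  have key : ∀ r : ℝ, P r = Λ * ((r - r_b) * ((r - r_c) * (r + r_b + r_c))) := by
    intro r
    simp only [hP]
    linear_combination r * h1 + h2
  refine ⟨r_b, r_c, hb0, hbc, ?_, ?_, ?_, ?_⟩
  · rw [hVP r_b hb0]
    have : P r_b = 0 := hrb
    rw [this]; simp
  · rw [hVP r_c hc0]
    have : P r_c = 0 := hrc
    rw [this]; simp
  · intro r h1r h2r
    have hr0 : 0 < r := hb0.trans h1r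
    have hPneg : P r < 0 := by
      rw [key r]
      apply mul_neg_of_pos_of_neg hΛ
      apply mul_neg_of_pos_of_neg (by linarith)
      exact mul_neg_of_neg_of_pos (by linarith) (by linarith)
    rw [hVP r hr0]
    apply div_pos (by linarith) (by linarith)
  · intro r hr hVr
    have hPr : P r = 0 := by
      rw [hVP r hr] at hVr
      have h3r : (3:ℝ) * r ≠ 0 := by positivity
      rcases div_eq_zero_iff.mp hVr with h | h
      · linarith [neg_eq_zero.mp h]
      · exact absurd h h3r
    rw [key r] at hPr
    have h4 : 0 < r + r_b + r_c := by linarith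
    rcases mul_eq_zero.mp hPr with h | h
    · exact absurd h (ne_of_gt hΛ)
    rcases mul_eq_zero.mp h with h | h
    · left; linarith [sub_eq_zero.mp h]
    rcases mul_eq_zero.mp h with h | h
    · right; linarith [sub_eq_zero.mp h]
    · exact absurd h (ne_of_gt h4)
end

section
/- If Λ > 0, M > 0, 9M²Λ < 1, and r_b < r_c are the two positive roots of V(r) = 1 - 2M/r - Λr²/3, then 2M < r_b < 3M < 1/√Λ < r_c < √(3/Λ). -/
/-- For Λ > 0, M > 0, 9M²Λ < 1, the two positive roots r_b < r_c of
V(r) = 1 - 2M/r - Λr²/3 satisfy 2M < r_b < 3M < 1/√Λ < r_c < √(3/Λ). -/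
theorem stmt_1 (Λ M : ℝ) (hΛ : 0 < Λ) (hM : 0 < M) (h9 : 9 * M ^ 2 * Λ < 1)
    (V : ℝ → ℝ) (hV : ∀ r, V r = 1 - 2 * M / r - Λ * r ^ 2 / 3)
    (r_b r_c : ℝ) (hb : 0 < r_b) (hbc : r_b < r_c)
    (hVb : V r_b = 0) (hVc : V r_c = 0) :
    2 * M < r_b ∧ r_b < 3 * M ∧ 3 * M < 1 / Real.sqrt Λ ∧
      1 / Real.sqrt Λ < r_c ∧ r_c < Real.sqrt (3 / Λ) := by
  have hc : 0 < r_c := hb.trans hbc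
  have hb' := hVb; rw [hV] at hb'
  have hc' := hVc; rw [hV] at hc'
  have hb0 : r_b ≠ 0 := ne_of_gt hb
  have hc0 : r_c ≠ 0 := ne_of_gt hc
  have Eb : Λ * r_b ^ 3 = 3 * r_b - 6 * M := by
    field_simp at hb'; linarith [hb']
  have Ec : Λ * r_c ^ 3 = 3 * r_c - 6 * M := by
    field_simp at hc'; linarith [hc']
  have key : (r_c - r_b) * (Λ * (r_b ^ 2 + r_b * r_c + r_c ^ 2) - 3) = 0 := by
    linear_combination Ec - Eb
  have E1 : Λ * (r_b ^ 2 + r_b * r_c + r_c ^ 2) = 3 := by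
    rcases mul_eq_zero.mp key with h | h
    · linarith
    · linarith
  have hs : Real.sqrt Λ ^ 2 = Λ := Real.sq_sqrt hΛ.le
  have hspos : 0 < Real.sqrt Λ := Real.sqrt_pos.mpr hΛ
  have g1 : 2 * M < r_b := by
    nlinarith [Eb, pow_pos hb 3, hΛ]
  have hΛrb2 : Λ * r_b ^ 2 < 1 := by
    nlinarith [E1, mul_pos hb hc, sq_nonneg (r_c - r_b), hΛ]
  have g2 : r_b < 3 * M := by
    nlinarith [Eb, hΛrb2, hb]
  have g3 : 3 * M < 1 / Real.sqrt Λ := by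
    rw [lt_div_iff₀ hspos]
    nlinarith [hs, h9, mul_pos (mul_pos hM hM) hΛ, hM, hspos]
  have hΛrc2 : 1 < Λ * r_c ^ 2 := by
    nlinarith [E1, hΛ, mul_pos hb hc, hb, hbc]
  have g4 : 1 / Real.sqrt Λ < r_c := by
    rw [one_div, ← Real.sqrt_inv]
    refine (Real.sqrt_lt' hc).mpr ?_
    nlinarith [hΛrc2, hΛ, mul_inv_cancel₀ (ne_of_gt hΛ)]
  have g5 : r_c < Real.sqrt (3 / Λ) := by
    refine (Real.lt_sqrt hc.le).mpr ?_
    rw [lt_div_iff₀ hΛ]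
    have hp : 0 < Λ * (r_b ^ 2 + r_b * r_c) := by positivity
    linarith [E1, hp]
  exact ⟨g1, g2, g3, g4, g5⟩
end

section
/- If Λ > 0, M > 0, and 9M²Λ > 1, then V(r) = 1 - 2M/r - Λr²/3 is strictly negative for all r > 0 (there are no horizons). -/
/-- For Λ > 0, M > 0, 9M²Λ > 1, the function V(r) = 1 - 2M/r - Λr²/3 is
strictly negative for all r > 0 (no horizons). -/
theorem stmt_2 (Λ M : ℝ) (hΛ : 0 < Λ) (hM : 0 < M) (h9 : 1 < 9 * M ^ 2 * Λ)
    (V : ℝ → ℝ) (hV : ∀ r, V r = 1 - 2 * M / r - Λ * r ^ 2 / 3) :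
    ∀ r, 0 < r → V r < 0 := by
  intro r hr
  rw [hV]
  have hr' : r ≠ 0 := hr.ne'
  set s := Real.sqrt Λ with hsdef
  have hs : s ^ 2 = Λ := Real.sq_sqrt hΛ.le
  have hs0 : 0 < s := Real.sqrt_pos.mpr hΛ
  have h1 : 1 < 3 * M * s := by nlinarith [mul_pos hM hs0]
  have key : (1 - 2 * M / r - Λ * r ^ 2 / 3) * (3 * r) < 0 := by
    have e : (1 - 2 * M / r - Λ * r ^ 2 / 3) * (3 * r) = 3 * r - 6 * M - Λ * r ^ 3 := by
      field_simp; ring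
    rw [e, ← hs]
    have h2 : 0 < s * (6 * M + s ^ 2 * r ^ 3 - 3 * r) := by
      nlinarith [mul_nonneg (sq_nonneg (s * r - 1)) (by positivity : (0:ℝ) ≤ s * r + 2), h1]
    nlinarith [mul_nonneg (sq_nonneg (s * r - 1)) (by positivity : (0:ℝ) ≤ s * r + 2), hs, h1, hs0, hr, mul_pos hs0 hr]
  nlinarith [key, hr]
end

section
/- The polynomial function f(r) = r²·V(r) + (3M - r)², where V(r) = 1 - 2M/r - Λr²/3, has exactly one root r_k in the interval (r_c, ∞), where r_c is the larger positive root of V. -/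
/-- For Λ > 0, M > 0, 9M²Λ < 1, the function f(r) = r²V(r) + (3M - r)² has
exactly one root r_k in (r_c, ∞), r_c being the larger positive root of V. -/
theorem stmt_4 (Λ M : ℝ) (hΛ : 0 < Λ) (hM : 0 < M) (h9 : 9 * M ^ 2 * Λ < 1)
    (V : ℝ → ℝ) (hV : ∀ r, V r = 1 - 2 * M / r - Λ * r ^ 2 / 3)
    (r_c : ℝ) (hc : 0 < r_c) (hVc : V r_c = 0)
    (hlarger : ∀ r, r_c < r → V r < 0)
    (f : ℝ → ℝ) (hf : ∀ r, f r = r ^ 2 * V r + (3 * M - r) ^ 2) :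
    ∃! r_k : ℝ, r_c < r_k ∧ f r_k = 0 := by
  -- f agrees with a polynomial everywhere
  have hfp : f = fun r => 2 * r ^ 2 - 8 * M * r + 9 * M ^ 2 - Λ * r ^ 4 / 3 := by
    funext r
    rw [hf, hV]
    rcases eq_or_ne r 0 with h0 | h0
    · simp [h0]; ring
    · field_simp; ring
  -- 3M < r_c
  have hV3 : 0 < V (3 * M) := by
    rw [hV]
    have : 2 * M / (3 * M) = 2 / 3 := by
      rw [div_eq_div_iff (by positivity) (by norm_num)]; ring
    rw [this]; nlinarith
  have h3M : 3 * M < r_c := by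
    by_contra h
    push_neg at h
    rcases lt_or_eq_of_le h with h | h
    · exact absurd (hlarger _ h) (by linarith)
    · rw [h] at hVc; linarith
  -- key relation from V r_c = 0
  have key : Λ * r_c ^ 3 = 3 * r_c - 6 * M := by
    rw [hV r_c] at hVc
    field_simp at hVc
    nlinarith [hVc]
  have hΛc : 1 < Λ * r_c ^ 2 := by nlinarith
  -- strict antitonicity on [r_c, ∞)
  have hanti : StrictAntiOn f (Set.Ici r_c) := by
    rw [hfp]
    apply strictAntiOn_of_deriv_neg (convex_Ici r_c)
    · fun_prop
    · intro x hx
      rw [interior_Ici] at hx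
      have hx' : r_c < x := hx
      have hd : HasDerivAt (fun r : ℝ => 2 * r ^ 2 - 8 * M * r + 9 * M ^ 2 - Λ * r ^ 4 / 3)
          (4 * x - 8 * M - 4 * Λ * x ^ 3 / 3) x := by
        have h1 := ((((hasDerivAt_pow 2 x).const_mul (2:ℝ)).sub
            ((hasDerivAt_id' (𝕜 := ℝ) x).const_mul (8 * M))).add_const (9 * M ^ 2)).sub
            (((hasDerivAt_pow 4 x).const_mul Λ).div_const 3)
        refine h1.congr_deriv ?_
        push_cast
        ring
      rw [hd.deriv]
      -- need: 4x - 8M - 4Λx³/3 < 0 i.e. Λx³ > 3x - 6M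
      have h1 : 0 < x - r_c := sub_pos.mpr hx'
      have h2 : (3:ℝ) < Λ * (x ^ 2 + x * r_c + r_c ^ 2) := by
        nlinarith [mul_pos hΛ (mul_pos h1 (by linarith : (0:ℝ) < x + 2 * r_c))]
      have hgx : Λ * x ^ 3 - 3 * x + 6 * M > 0 := by
        nlinarith [mul_pos h1 (by linarith : (0:ℝ) < Λ * (x ^ 2 + x * r_c + r_c ^ 2) - 3)]
      linarith
  -- f r_c > 0
  have hfc : 0 < f r_c := by
    rw [hf, hVc]
    have : 3 * M - r_c ≠ 0 := by linarith
    positivity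
  -- pick R with f R < 0
  obtain ⟨R, hR⟩ : ∃ R : ℝ, R = r_c + 3 * M + 3 / Λ + 3 := ⟨_, rfl⟩
  have hpos : 0 < 3 / Λ := by positivity
  have hRc : r_c < R := by linarith
  have hΛR : 3 < Λ * R := by
    have h := (div_lt_iff₀ hΛ).mp (show 3 / Λ < R by linarith)
    linarith
  have hR3' : 3 < R := by linarith
  have hRM : 3 * M < R := by linarith
  have hRpos : 0 < R := by linarith
  have hfR : f R < 0 := by
    rw [hfp]
    simp only
    have hA : 9 * M ^ 2 < R ^ 2 := by nlinarith
    have hB : 9 < Λ * R ^ 2 := by nlinarith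
    have hC : 9 * R ^ 2 < Λ * R ^ 4 := by
      nlinarith [mul_pos (pow_pos hRpos 2) (show (0:ℝ) < Λ * R ^ 2 - 9 by linarith)]
    have hD : 0 < 8 * M * R := by positivity
    linarith
  -- IVT gives a root in (r_c, R)
  have hcont : ContinuousOn f (Set.Icc r_c R) := by
    rw [hfp]; fun_prop
  have hsub := intermediate_value_Ioo' (le_of_lt hRc) hcont
  have h0mem : (0 : ℝ) ∈ Set.Ioo (f R) (f r_c) := ⟨hfR, hfc⟩
  obtain ⟨x, hxmem, hxf⟩ := hsub h0mem
  refine ⟨x, ⟨hxmem.1, hxf⟩, ?_⟩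
  rintro y ⟨hy, hyf⟩
  exact hanti.injOn (le_of_lt hy) (le_of_lt hxmem.1) (by rw [hyf, hxf])
end

section
/- For Λ > 0, M > 0, 9M²Λ < 1, the mean curvature K_k = K_m(r_k) of the constant-radius CMC hypersurface at the cusp radius r_k satisfies √Λ < K_k < √(3Λ), where K_m(r) = -(1/r²)·(3M - r)/√(-V(r)) + (3/r)·√(-V(r)) evaluated at r = r_k, and r_k > r_c is determined by r_k²·V(r_k) + (3M - r_k)² = 0. -/
set_option maxHeartbeats 800000


/-- For Λ > 0, M > 0, 9M²Λ < 1, the mean curvature K_k = K_m(r_k) at the cusp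
radius r_k satisfies √Λ < K_k < √(3Λ). -/
theorem stmt_5 (Λ M : ℝ) (hΛ : 0 < Λ) (hM : 0 < M) (h9 : 9 * M ^ 2 * Λ < 1)
    (V : ℝ → ℝ) (hV : ∀ r, V r = 1 - 2 * M / r - Λ * r ^ 2 / 3)
    (r_c : ℝ) (hc : 0 < r_c) (hVc : V r_c = 0)
    (hlarger : ∀ r, r_c < r → V r < 0)
    (r_k : ℝ) (hk : r_c < r_k)
    (hrk : r_k ^ 2 * V r_k + (3 * M - r_k) ^ 2 = 0)
    (K_k : ℝ)
    (hKk : K_k = -(1 / r_k ^ 2) * (3 * M - r_k) / Real.sqrt (-V r_k) +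
      (3 / r_k) * Real.sqrt (-V r_k)) :
    Real.sqrt Λ < K_k ∧ K_k < Real.sqrt (3 * Λ) := by
  have hr0 : 0 < r_k := hc.trans hk
  have hr0' : r_k ≠ 0 := ne_of_gt hr0
  have hVk : V r_k < 0 := hlarger r_k hk
  -- show 3M < r_k
  have h3M : 3 * M < r_k := by
    rcases lt_trichotomy r_k (3 * M) with h | h | h
    · exfalso
      have hVm : V (3 * M) < 0 := hlarger (3 * M) (hk.trans h)
      rw [hV] at hVm
      have h23 : (2 : ℝ) * M / (3 * M) = 2 / 3 := by
        field_simp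
      rw [h23] at hVm
      nlinarith
    · exfalso
      have h0 : (3 * M - r_k) ^ 2 = 0 := by rw [h]; ring
      have := mul_neg_of_pos_of_neg (pow_pos hr0 2) hVk
      linarith
    · exact h
  have hd : r_k - 3 * M ≠ 0 := by linarith
  -- Λ in terms of r_k
  have hrkV := hrk
  rw [hV r_k] at hrkV
  have hL : Λ * r_k ^ 4 = 6 * r_k ^ 2 - 24 * M * r_k + 27 * M ^ 2 := by
    field_simp at hrkV
    nlinarith [hrkV]
  -- compute the square root
  have h1 : -V r_k = ((r_k - 3 * M) / r_k) ^ 2 := by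
    field_simp
    nlinarith [hrk]
  have hsq : Real.sqrt (-V r_k) = (r_k - 3 * M) / r_k := by
    rw [h1, Real.sqrt_sq (by apply div_nonneg <;> linarith)]
  have hK : K_k = (4 * r_k - 9 * M) / r_k ^ 2 := by
    rw [hKk, hsq]
    field_simp
    ring
  have hKpos : 0 < K_k := by
    rw [hK]
    have : 0 < 4 * r_k - 9 * M := by nlinarith
    positivity
  have hK2 : K_k ^ 2 * r_k ^ 4 = (4 * r_k - 9 * M) ^ 2 := by
    rw [hK, div_pow]
    field_simp
  have hr4 : (0 : ℝ) < r_k ^ 4 := pow_pos hr0 4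
  constructor
  · rw [Real.sqrt_lt' hKpos]
    have hmul : Λ * r_k ^ 4 < K_k ^ 2 * r_k ^ 4 := by
      rw [hL, hK2]
      nlinarith [mul_pos (show (0:ℝ) < 5 * r_k - 9 * M by nlinarith)
        (show (0:ℝ) < r_k - 3 * M by linarith)]
    exact (mul_lt_mul_iff_of_pos_right hr4).mp hmul
  · have hmul : K_k ^ 2 * r_k ^ 4 < 3 * Λ * r_k ^ 4 := by
      rw [hK2]
      nlinarith [pow_pos hr0 2, hL]
    exact (Real.lt_sqrt hKpos.le).mpr ((mul_lt_mul_iff_of_pos_right hr4).mp hmul)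
end

section
/- For r_m > r_c (so that V(r_m) < 0), the pair (K, C) = (K_m(r_m), C_m(r_m)) with K_m(r_m) = (1/r_m²)·(3M - r_m)/√(-V(r_m)) - (3/r_m)·√(-V(r_m)) and C_m(r_m) = (r_m/3)·(3M - r_m)/√(-V(r_m)) satisfies D(r_m) = 0 and D'(r_m) = 0, where D(r) = 1 - 2M/r - Λr²/3 + (Kr/3 - C/r²)². -/
/-- For r_m > r_c (so V(r_m) < 0), the pair (K, C) = (K_m(r_m), C_m(r_m))
makes D(r) = V(r) + (Kr/3 - C/r²)² satisfy D(r_m) = 0 and D'(r_m) = 0. -/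
theorem stmt_6 (Λ M : ℝ) (hΛ : 0 < Λ) (hM : 0 < M) (h9 : 9 * M ^ 2 * Λ < 1)
    (V : ℝ → ℝ) (hV : ∀ r, V r = 1 - 2 * M / r - Λ * r ^ 2 / 3)
    (r_c : ℝ) (hc : 0 < r_c) (hVc : V r_c = 0)
    (hlarger : ∀ r, r_c < r → V r < 0)
    (r_m : ℝ) (hm : r_c < r_m)
    (K C : ℝ)
    (hK : K = (1 / r_m ^ 2) * (3 * M - r_m) / Real.sqrt (-V r_m) -
      (3 / r_m) * Real.sqrt (-V r_m))
    (hC : C = (r_m / 3) * (3 * M - r_m) / Real.sqrt (-V r_m))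
    (D : ℝ → ℝ) (hD : ∀ r, D r = V r + (K * r / 3 - C / r ^ 2) ^ 2) :
    D r_m = 0 ∧ deriv D r_m = 0 := by
  have hr : 0 < r_m := lt_trans hc hm
  have hrne : r_m ≠ 0 := hr.ne'
  have hVneg : V r_m < 0 := hlarger r_m hm
  set s := Real.sqrt (-V r_m) with hsdef
  have hs : 0 < s := Real.sqrt_pos.mpr (by linarith)
  have hsne : s ≠ 0 := hs.ne'
  have hs2 : s ^ 2 = -V r_m := Real.sq_sqrt (by linarith)
  have hVrm : V r_m = 1 - 2 * M / r_m - Λ * r_m ^ 2 / 3 := hV r_m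
  have hs2' : s ^ 2 = -(1 - 2 * M / r_m - Λ * r_m ^ 2 / 3) := by rw [hs2, hVrm]
  have hkey : K * r_m / 3 - C / r_m ^ 2 = -s := by
    rw [hK, hC]; field_simp; ring
  constructor
  · rw [hD, hVrm, hkey]
    have : (-s) ^ 2 = s ^ 2 := by ring
    rw [this, hs2']
    ring
  · have hDfun : D = fun r => 1 - 2 * M / r - Λ * r ^ 2 / 3 +
        (K * r / 3 - C / r ^ 2) ^ 2 := funext (fun r => by rw [hD r, hV r])
    have h1 : HasDerivAt (fun r : ℝ => 2 * M / r) (2 * M * (-(r_m ^ 2)⁻¹)) r_m := by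
      simpa [div_eq_mul_inv] using (hasDerivAt_inv hrne).const_mul (2 * M)
    have h2 : HasDerivAt (fun r : ℝ => Λ * r ^ 2 / 3)
        (Λ * (2 * r_m ^ 1) / 3) r_m := by
      exact ((hasDerivAt_pow 2 r_m).const_mul Λ).div_const 3
    have h3 : HasDerivAt (fun r : ℝ => K * r / 3) (K * 1 / 3) r_m :=
      ((hasDerivAt_id r_m).const_mul K).div_const 3
    have h4 : HasDerivAt (fun r : ℝ => C / r ^ 2)
        (C * (-(2 * r_m ^ 1) / (r_m ^ 2) ^ 2)) r_m := by
      simpa [div_eq_mul_inv] using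
        ((hasDerivAt_pow 2 r_m).inv (pow_ne_zero 2 hrne)).const_mul C
    have h5 : HasDerivAt (fun r : ℝ => (K * r / 3 - C / r ^ 2) ^ 2)
        (2 * (K * r_m / 3 - C / r_m ^ 2) ^ 1 * (K * 1 / 3 -
          C * (-(2 * r_m ^ 1) / (r_m ^ 2) ^ 2))) r_m := (h3.sub h4).pow 2
    have hder : HasDerivAt D
        (0 - 2 * M * (-(r_m ^ 2)⁻¹) - Λ * (2 * r_m ^ 1) / 3 +
          2 * (K * r_m / 3 - C / r_m ^ 2) ^ 1 * (K * 1 / 3 -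
            C * (-(2 * r_m ^ 1) / (r_m ^ 2) ^ 2))) r_m := by
      rw [hDfun]
      exact (((hasDerivAt_const r_m (1 : ℝ)).sub h1).sub h2).add h5
    rw [hder.deriv]
    simp only [pow_one]
    rw [hkey]
    have hkey2 : K * 1 / 3 - C * (-(2 * r_m) / (r_m ^ 2) ^ 2) =
        (3 * M - r_m) / (r_m ^ 2 * s) - s / r_m := by
      rw [hK, hC]; field_simp; ring
    rw [hkey2]
    have hmain : 2 * -s * ((3 * M - r_m) / (r_m ^ 2 * s) - s / r_m) =
        -2 * (3 * M - r_m) / r_m ^ 2 + 2 * s ^ 2 / r_m := by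
      field_simp; ring
    rw [hmain, hs2']
    field_simp
    ring
end

section
/- The derivatives of the curve r_m ↦ (K_m(r_m), C_m(r_m)) of constant-radius CMC data satisfy dC_m/dr_m = (r_m³/3)·(dK_m/dr_m) for all r_m > r_c. -/
/-- The curve r_m ↦ (K_m(r_m), C_m(r_m)) of constant-radius CMC data satisfies
dC_m/dr_m = (r_m³/3)·dK_m/dr_m for all r_m > r_c. -/
theorem stmt_7 (Λ M : ℝ) (hΛ : 0 < Λ) (hM : 0 < M) (h9 : 9 * M ^ 2 * Λ < 1)
    (V : ℝ → ℝ) (hV : ∀ r, V r = 1 - 2 * M / r - Λ * r ^ 2 / 3)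
    (r_c : ℝ) (hc : 0 < r_c) (hVc : V r_c = 0)
    (hlarger : ∀ r, r_c < r → V r < 0)
    (Km Cm : ℝ → ℝ)
    (hKm : ∀ r, Km r = (3 * M - r) / (r ^ 2 * Real.sqrt (-V r)) -
      (3 / r) * Real.sqrt (-V r))
    (hCm : ∀ r, Cm r = (r / 3) * (3 * M - r) / Real.sqrt (-V r)) :
    ∀ r_m, r_c < r_m → deriv Cm r_m = (r_m ^ 3 / 3) * deriv Km r_m := by
  intro r_m hr_m
  have hr : 0 < r_m := lt_trans hc hr_m
  have hr0 : r_m ≠ 0 := ne_of_gt hr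
  have hVneg : V r_m < 0 := hlarger r_m hr_m
  have hVpos : 0 < -V r_m := by linarith
  have hspos : 0 < Real.sqrt (-V r_m) := Real.sqrt_pos.2 hVpos
  set s := Real.sqrt (-V r_m) with hsdef
  have hsne : s ≠ 0 := ne_of_gt hspos
  -- key pointwise identity
  have key : ∀ x, Cm x = x ^ 3 / 3 * Km x + x ^ 2 * Real.sqrt (-V x) := by
    intro x
    rw [hCm x, hKm x]
    by_cases hx : x = 0
    · simp [hx]
    by_cases hsx : Real.sqrt (-V x) = 0
    · simp [hsx]
    field_simp
    ring
  have eC : Cm = fun x => x ^ 3 / 3 * Km x + x ^ 2 * Real.sqrt (-V x) := funext key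
  -- derivative of the potential term
  have hW : HasDerivAt (fun x => -V x) (-(2 * M) / r_m ^ 2 + 2 * Λ * r_m / 3) r_m := by
    have e1 : (fun x : ℝ => -V x) = fun x => -1 + 2 * M * x⁻¹ + Λ * x ^ 2 / 3 := by
      funext x; rw [hV x]; ring
    rw [e1]
    have h := (((hasDerivAt_inv hr0).const_mul (2 * M)).const_add (-1)).add
      (((hasDerivAt_pow 2 r_m).const_mul Λ).div_const 3)
    refine h.congr_deriv ?_
    push_cast
    field_simp
  have hVne : -V r_m ≠ 0 := ne_of_gt hVpos
  have hg : HasDerivAt (fun x => Real.sqrt (-V x))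
      (1 / (2 * s) * (-(2 * M) / r_m ^ 2 + 2 * Λ * r_m / 3)) r_m := by
    have := (Real.hasDerivAt_sqrt hVne).comp r_m hW
    simpa [Function.comp_def, hsdef] using this
  set sd := 1 / (2 * s) * (-(2 * M) / r_m ^ 2 + 2 * Λ * r_m / 3) with hsddef
  -- differentiability of Km
  have h1 : HasDerivAt (fun x : ℝ => 3 * M - x) (-1) r_m := by
    simpa using (hasDerivAt_id' r_m).const_sub (3 * M)
  have h2 : HasDerivAt (fun x => x ^ 2 * Real.sqrt (-V x))
      (2 * r_m * s + r_m ^ 2 * sd) r_m := by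
    have := (hasDerivAt_pow 2 r_m).mul hg
    refine this.congr_deriv ?_
    push_cast
    ring
  have hBne : r_m ^ 2 * s ≠ 0 := by positivity
  have eK : Km = fun x => (3 * M - x) / (x ^ 2 * Real.sqrt (-V x)) -
      (3 * x⁻¹) * Real.sqrt (-V x) := by
    funext x; rw [hKm x, div_eq_mul_inv 3 x]
  have hKdiff : DifferentiableAt ℝ Km r_m := by
    rw [eK]
    exact ((h1.div h2 hBne).sub (((hasDerivAt_inv hr0).const_mul 3).mul hg)).differentiableAt
  -- derivative of Cm via the key identity
  have hC : HasDerivAt Cm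
      (r_m ^ 2 * Km r_m + r_m ^ 3 / 3 * deriv Km r_m + (2 * r_m * s + r_m ^ 2 * sd)) r_m := by
    rw [eC]
    have := (((hasDerivAt_pow 3 r_m).div_const 3).mul hKdiff.hasDerivAt).add h2
    refine this.congr_deriv ?_
    push_cast
    ring
  rw [hC.deriv]
  -- the correction term vanishes
  have hs2 : s ^ 2 = -V r_m := Real.sq_sqrt (le_of_lt hVpos)
  have hkey : r_m * s ^ 2 = 2 * M - r_m + Λ * r_m ^ 3 / 3 := by
    rw [hs2, hV r_m]
    field_simp
    ring
  have h0 : r_m ^ 2 * Km r_m + (2 * r_m * s + r_m ^ 2 * sd) = 0 := by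
    rw [hKm r_m, hsddef, ← hsdef]
    field_simp
    linear_combination (-3) * hkey
  linear_combination h0
end

section
/- Both dK_m/dr_m and dC_m/dr_m vanish at r_m = r_k, where r_k is the unique solution in (r_c, ∞) of r²·V(r) + (3M - r)² = 0. -/
/-- Both dK_m/dr_m and dC_m/dr_m vanish at the cusp r_m = r_k, where r_k solves
r²V(r) + (3M - r)² = 0 in (r_c, ∞). -/
theorem stmt_8 (Λ M : ℝ) (hΛ : 0 < Λ) (hM : 0 < M) (h9 : 9 * M ^ 2 * Λ < 1)
    (V : ℝ → ℝ) (hV : ∀ r, V r = 1 - 2 * M / r - Λ * r ^ 2 / 3)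
    (r_c : ℝ) (hc : 0 < r_c) (hVc : V r_c = 0)
    (hlarger : ∀ r, r_c < r → V r < 0)
    (Km Cm : ℝ → ℝ)
    (hKm : ∀ r, Km r = (3 * M - r) / (r ^ 2 * Real.sqrt (-V r)) -
      (3 / r) * Real.sqrt (-V r))
    (hCm : ∀ r, Cm r = (r / 3) * (3 * M - r) / Real.sqrt (-V r))
    (r_k : ℝ) (hk : r_c < r_k)
    (hrk : r_k ^ 2 * V r_k + (3 * M - r_k) ^ 2 = 0) :
    deriv Km r_k = 0 ∧ deriv Cm r_k = 0 := by
  have hr0 : 0 < r_k := lt_trans hc hk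
  have hrne : r_k ≠ 0 := ne_of_gt hr0
  have hVk : V r_k < 0 := hlarger r_k hk
  have hVeq : V r_k = 1 - 2*M/r_k - Λ*r_k^2/3 := hV r_k
  have hWpos : 0 < -(1 - 2*M/r_k - Λ*r_k^2/3) := by rw [← hVeq]; linarith
  set a := Real.sqrt (-(1 - 2*M/r_k - Λ*r_k^2/3)) with hadef
  have hapos : 0 < a := Real.sqrt_pos.mpr hWpos
  have hane : a ≠ 0 := ne_of_gt hapos
  have ha2 : a^2 = -(1 - 2*M/r_k - Λ*r_k^2/3) := Real.sq_sqrt hWpos.le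
  have hcon : (3*M - r_k)^2 = r_k^2 * a^2 := by
    rw [ha2, ← hVeq]; nlinarith [hrk]
  have hdenne : r_k^2 * a ≠ 0 := by positivity
  -- inner derivatives
  have hw : HasDerivAt (fun r : ℝ => -(1 - 2*M/r - Λ*r^2/3))
      (-((0 - ((0 * r_k - 2*M*1)/r_k^2)) - Λ*(2*r_k^1)/3)) r_k := by
    have h1 : HasDerivAt (fun r : ℝ => 2*M/r) ((0 * r_k - 2*M*1)/r_k^2) r_k :=
      (hasDerivAt_const r_k (2*M)).div (hasDerivAt_id r_k) hrne
    have h2 : HasDerivAt (fun r : ℝ => Λ*r^2/3) (Λ*(2*r_k^1)/3) r_k :=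
      (((hasDerivAt_pow 2 r_k)).const_mul Λ).div_const 3
    exact (((hasDerivAt_const r_k 1).sub h1).sub h2).neg
  have hs : HasDerivAt (fun r : ℝ => Real.sqrt (-(1 - 2*M/r - Λ*r^2/3)))
      (1 / (2 * a) * (-((0 - ((0 * r_k - 2*M*1)/r_k^2)) - Λ*(2*r_k^1)/3))) r_k :=
    (Real.hasDerivAt_sqrt (ne_of_gt hWpos)).comp r_k hw
  set s' := 1 / (2 * a) * (-((0 - ((0 * r_k - 2*M*1)/r_k^2)) - Λ*(2*r_k^1)/3)) with hs'def
  -- Km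
  have hKmfun : Km = fun r : ℝ => (3 * M - r) / (r ^ 2 * Real.sqrt (-(1 - 2*M/r - Λ*r^2/3))) -
      (3 / r) * Real.sqrt (-(1 - 2*M/r - Λ*r^2/3)) := by
    funext r; rw [hKm, hV]
  have hnum : HasDerivAt (fun r : ℝ => 3*M - r) (0 - 1) r_k :=
    (hasDerivAt_const r_k (3*M)).sub (hasDerivAt_id r_k)
  have hd1 : HasDerivAt (fun r : ℝ => r^2 * Real.sqrt (-(1 - 2*M/r - Λ*r^2/3)))
      (2*r_k^1 * a + r_k^2 * s') r_k := (hasDerivAt_pow 2 r_k).mul hs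
  have h3r : HasDerivAt (fun r : ℝ => 3/r) ((0 * r_k - 3*1)/r_k^2) r_k :=
    (hasDerivAt_const r_k 3).div (hasDerivAt_id r_k) hrne
  have hKmD : HasDerivAt (fun r : ℝ => (3 * M - r) / (r ^ 2 * Real.sqrt (-(1 - 2*M/r - Λ*r^2/3))) -
      (3 / r) * Real.sqrt (-(1 - 2*M/r - Λ*r^2/3)))
      (((0-1) * (r_k^2 * a) - (3*M - r_k) * (2*r_k^1 * a + r_k^2 * s')) / (r_k^2 * a)^2
        - (((0 * r_k - 3*1)/r_k^2) * a + (3/r_k) * s')) r_k :=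
    (hnum.div hd1 hdenne).sub (h3r.mul hs)
  -- Cm
  have hCmfun : Cm = fun r : ℝ => (r / 3) * (3 * M - r) / Real.sqrt (-(1 - 2*M/r - Λ*r^2/3)) := by
    funext r; rw [hCm, hV]
  have hnum2 : HasDerivAt (fun r : ℝ => (r/3) * (3*M - r))
      ((1/3) * (3*M - r_k) + (r_k/3) * (0-1)) r_k := by
    have := ((hasDerivAt_id r_k).div_const 3).mul hnum
    exact this
  have hCmD : HasDerivAt (fun r : ℝ => (r / 3) * (3 * M - r) / Real.sqrt (-(1 - 2*M/r - Λ*r^2/3)))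
      ((((1/3) * (3*M - r_k) + (r_k/3) * (0-1)) * a - (r_k/3) * (3*M - r_k) * s') / a^2) r_k :=
    hnum2.div hs hane
  have hL3 : Λ * r_k^3 = 3*a^2*r_k + 3*r_k - 6*M := by
    have h := ha2
    field_simp at h
    nlinarith [h]
  constructor
  · rw [hKmfun, hKmD.deriv, hs'def]
    field_simp
    linear_combination 6 * hcon + (2*r_k - 6*M - 6*r_k*a^2) * hL3
  · rw [hCmfun, hCmD.deriv, hs'def]
    field_simp
    linear_combination 6 * hcon + (2*r_k - 6*M) * hL3
end

section
/- At the cusp value (K, C) = (K_m(r_k), C_m(r_k)), the function D(r) = V(r) + (Kr/3 - C/r²)² has a zero of order three at r = r_k: D(r_k) = D'(r_k) = D''(r_k) = 0. -/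
lemma hasDerivAt_D0 (M Λ K C r : ℝ) (hr : r ≠ 0) :
    HasDerivAt (fun x : ℝ => 1 - 2*M/x - Λ*x^2/3 + (K*x/3 - C/x^2)^2)
      (2*M/r^2 - 2*Λ*r/3 + 2*(K*r/3 - C/r^2)*(K/3 + 2*C/r^3)) r := by
  have h1 : HasDerivAt (fun x : ℝ => x⁻¹) (-(r^2)⁻¹) r := hasDerivAt_inv hr
  have h2 : HasDerivAt (fun x : ℝ => (x^2)⁻¹) (-(2*r^1)/(r^2)^2) r :=
    (hasDerivAt_pow 2 r).inv (pow_ne_zero 2 hr)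
  have hg : HasDerivAt (fun x : ℝ => K*x/3 - C*(x^2)⁻¹)
      (K*1/3 - C*(-(2*r^1)/(r^2)^2)) r :=
    ((((hasDerivAt_id r).const_mul K).div_const 3)).sub (h2.const_mul C)
  have H := (((hasDerivAt_const r (1:ℝ)).sub (h1.const_mul (2*M))).sub
      (((hasDerivAt_pow 2 r).const_mul Λ).div_const 3)).add (hg.pow 2)
  have Heq : (fun x : ℝ => 1 - 2*M*x⁻¹ - Λ*x^2/3 + (K*x/3 - C*(x^2)⁻¹)^2)
      = (fun x : ℝ => 1 - 2*M/x - Λ*x^2/3 + (K*x/3 - C/x^2)^2) := by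
    funext x; rw [div_eq_mul_inv (2*M), div_eq_mul_inv C]
  change HasDerivAt (fun x : ℝ => 1 - 2*M*x⁻¹ - Λ*x^2/3 + (K*x/3 - C*(x^2)⁻¹)^2) _ r at H
  rw [Heq] at H
  convert H using 1
  norm_num
  field_simp
  ring

lemma hasDerivAt_D1 (M Λ K C r : ℝ) (hr : r ≠ 0) :
    HasDerivAt (fun x : ℝ => 2*M/x^2 - 2*Λ*x/3 + 2*(K*x/3 - C/x^2)*(K/3 + 2*C/x^3))
      (-(4*M)/r^3 - 2*Λ/3 + 2*(K/3 + 2*C/r^3)^2 + 2*(K*r/3 - C/r^2)*(-(6*C)/r^4)) r := by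
  have h2 : HasDerivAt (fun x : ℝ => (x^2)⁻¹) (-(2*r^1)/(r^2)^2) r :=
    (hasDerivAt_pow 2 r).inv (pow_ne_zero 2 hr)
  have h3 : HasDerivAt (fun x : ℝ => (x^3)⁻¹) (-(3*r^2)/(r^3)^2) r :=
    (hasDerivAt_pow 3 r).inv (pow_ne_zero 3 hr)
  have hg : HasDerivAt (fun x : ℝ => K*x/3 - C*(x^2)⁻¹)
      (K*1/3 - C*(-(2*r^1)/(r^2)^2)) r :=
    ((((hasDerivAt_id r).const_mul K).div_const 3)).sub (h2.const_mul C)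
  have hh : HasDerivAt (fun x : ℝ => K/3 + 2*C*(x^3)⁻¹)
      (0 + 2*C*(-(3*r^2)/(r^3)^2)) r :=
    (hasDerivAt_const r (K/3)).add (h3.const_mul (2*C))
  have H := ((h2.const_mul (2*M)).sub
      ((((hasDerivAt_id r).const_mul (2*Λ)).div_const 3))).add
      (((hg.mul hh).const_mul 2))
  have Heq : (fun x : ℝ => 2*M*(x^2)⁻¹ - 2*Λ*x/3 + 2*((K*x/3 - C*(x^2)⁻¹)*(K/3 + 2*C*(x^3)⁻¹)))
      = (fun x : ℝ => 2*M/x^2 - 2*Λ*x/3 + 2*(K*x/3 - C/x^2)*(K/3 + 2*C/x^3)) := by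
    funext x
    rw [div_eq_mul_inv (2*M), div_eq_mul_inv C, div_eq_mul_inv (2*C)]
    ring
  simp only [id_eq] at H
  change HasDerivAt (fun x : ℝ => 2*M*(x^2)⁻¹ - 2*Λ*x/3 + 2*((K*x/3 - C*(x^2)⁻¹)*(K/3 + 2*C*(x^3)⁻¹))) _ r at H
  rw [Heq] at H
  convert H using 1
  field_simp
  ring

/-- At the cusp (K, C) = (K_m(r_k), C_m(r_k)), the function
D(r) = V(r) + (Kr/3 - C/r²)² has a third-order zero at r = r_k. -/
theorem stmt_9 (Λ M : ℝ) (hΛ : 0 < Λ) (hM : 0 < M) (h9 : 9 * M ^ 2 * Λ < 1)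
    (V : ℝ → ℝ) (hV : ∀ r, V r = 1 - 2 * M / r - Λ * r ^ 2 / 3)
    (r_c : ℝ) (hc : 0 < r_c) (hVc : V r_c = 0)
    (hlarger : ∀ r, r_c < r → V r < 0)
    (r_k : ℝ) (hk : r_c < r_k)
    (hrk : r_k ^ 2 * V r_k + (3 * M - r_k) ^ 2 = 0)
    (K C : ℝ)
    (hK : K = (3 * M - r_k) / (r_k ^ 2 * Real.sqrt (-V r_k)) -
      (3 / r_k) * Real.sqrt (-V r_k))
    (hC : C = (r_k / 3) * (3 * M - r_k) / Real.sqrt (-V r_k))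
    (D : ℝ → ℝ) (hD : ∀ r, D r = V r + (K * r / 3 - C / r ^ 2) ^ 2) :
    D r_k = 0 ∧ deriv D r_k = 0 ∧ deriv (deriv D) r_k = 0 := by
  have hrk0 : 0 < r_k := hc.trans hk
  have hrkne : r_k ≠ 0 := ne_of_gt hrk0
  -- 3M ≤ r_c
  have h3Mc : 3 * M ≤ r_c := by
    by_contra h
    push_neg at h
    have h1 := hlarger (3*M) h
    rw [hV] at h1
    have hM0 : (3*M) ≠ 0 := by positivity
    have h2 : 2*M/(3*M) = 2/3 := by rw [div_eq_iff hM0]; ring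
    rw [h2] at h1
    nlinarith [h1, hM, h9]
  have h3Mk : 3 * M < r_k := lt_of_le_of_lt h3Mc hk
  have hne3 : r_k - 3*M ≠ 0 := ne_of_gt (by linarith)
  have hVkeq : V r_k = -((r_k - 3*M)/r_k)^2 := by
    field_simp
    linear_combination hrk
  have hs : Real.sqrt (-V r_k) = (r_k - 3*M)/r_k := by
    rw [hVkeq, neg_neg, Real.sqrt_sq (div_nonneg (by linarith) hrk0.le)]
  have hKv : K = (9*M - 4*r_k)/r_k^2 := by
    rw [hK, hs]; field_simp; ring
  have hCv : C = -(r_k^2)/3 := by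
    rw [hC, hs]; field_simp; ring
  have hΛv : Λ = 3*(2*r_k^2 - 8*M*r_k + 9*M^2)/r_k^4 := by
    have h1 : 1 - 2*M/r_k - Λ*r_k^2/3 = -((r_k - 3*M)/r_k)^2 := by
      rw [← hV r_k, hVkeq]
    rw [eq_div_iff (pow_ne_zero 4 hrkne)]
    field_simp at h1
    nlinarith [h1]
  have hDf : D = (fun x : ℝ => 1 - 2*M/x - Λ*x^2/3 + (K*x/3 - C/x^2)^2) :=
    funext fun r => by rw [hD, hV]
  have hD1 : ∀ x : ℝ, x ≠ 0 → deriv D x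
      = 2*M/x^2 - 2*Λ*x/3 + 2*(K*x/3 - C/x^2)*(K/3 + 2*C/x^3) := fun x hx => by
    rw [hDf]; exact (hasDerivAt_D0 M Λ K C x hx).deriv
  refine ⟨?_, ?_, ?_⟩
  · rw [hD r_k, hVkeq, hKv, hCv]
    field_simp
    ring
  · rw [hD1 r_k hrkne, hKv, hCv, hΛv]
    field_simp
    ring
  · have hev : deriv D =ᶠ[nhds r_k]
        (fun x : ℝ => 2*M/x^2 - 2*Λ*x/3 + 2*(K*x/3 - C/x^2)*(K/3 + 2*C/x^3)) :=
      (eventually_ne_nhds hrkne).mono (fun x hx => hD1 x hx)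
    rw [hev.deriv_eq, (hasDerivAt_D1 M Λ K C r_k hrkne).deriv, hKv, hCv, hΛv]
    field_simp
    ring
end

section
/- If r_min is a simple root of D(r) with D'(r_min) > 0 and r_min equals the cosmological horizon r_c (i.e., V(r_c) = 0), a contradiction follows: D(r_c) = 0 forces (K r_c/3 - C/r_c²)² = 0 and hence D'(r_c) = V'(r_c) < 0. Therefore no compact CMC data set has r_min = r_c. -/
/-- If D(r_c) = 0 at the cosmological horizon r_c (where V(r_c) = 0 and
V'(r_c) < 0), then D'(r_c) = V'(r_c) < 0; hence r_min ≠ r_c for compact CMC data. -/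
theorem stmt_11 (Λ M : ℝ) (hΛ : 0 < Λ) (hM : 0 < M) (h9 : 9 * M ^ 2 * Λ < 1)
    (V : ℝ → ℝ) (hV : ∀ r, V r = 1 - 2 * M / r - Λ * r ^ 2 / 3)
    (r_c : ℝ) (hc : 0 < r_c) (hVc : V r_c = 0) (hVc' : deriv V r_c < 0)
    (K C : ℝ)
    (D : ℝ → ℝ) (hD : ∀ r, D r = V r + (K * r / 3 - C / r ^ 2) ^ 2)
    (hDc : D r_c = 0) :
    deriv D r_c = deriv V r_c ∧ deriv D r_c < 0 := by
  have hne : r_c ≠ 0 := ne_of_gt hc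
  -- g r_c = 0
  have hg0 : K * r_c / 3 - C / r_c ^ 2 = 0 := by
    have h := hD r_c
    rw [hVc, hDc] at h
    have : (K * r_c / 3 - C / r_c ^ 2) ^ 2 = 0 := by linarith
    exact pow_eq_zero_iff (n := 2) (by norm_num) |>.mp this
  have hVfun : V = fun r => 1 - 2 * M / r - Λ * r ^ 2 / 3 := funext hV
  have hgder : HasDerivAt (fun r : ℝ => K * r / 3 - C / r ^ 2)
      (K / 3 - (-(C * (2 * r_c)) / (r_c ^ 2) ^ 2)) r_c := by
    have h1 : HasDerivAt (fun r : ℝ => K * r / 3) (K / 3) r_c := by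
      simpa using ((hasDerivAt_id r_c).const_mul K).div_const 3
    have h2 : HasDerivAt (fun r : ℝ => C / r ^ 2)
        (-(C * (2 * r_c)) / (r_c ^ 2) ^ 2) r_c := by
      have := (hasDerivAt_const r_c C).fun_div (hasDerivAt_pow 2 r_c) (pow_ne_zero 2 hne)
      simpa [mul_comm, mul_assoc] using this
    simpa using h1.fun_sub h2
  have hfder : HasDerivAt (fun r : ℝ => 1 - 2 * M / r - Λ * r ^ 2 / 3)
      (0 - (-(2 * M) / r_c ^ 2) - Λ * (2 * r_c) / 3) r_c := by
    have h1 : HasDerivAt (fun r : ℝ => 2 * M / r) (-(2 * M) / r_c ^ 2) r_c := by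
      have := (hasDerivAt_const r_c (2 * M)).fun_div (hasDerivAt_id r_c) hne
      simpa using this
    have h2 : HasDerivAt (fun r : ℝ => Λ * r ^ 2 / 3) (Λ * (2 * r_c) / 3) r_c := by
      simpa using ((hasDerivAt_pow 2 r_c).const_mul Λ).div_const 3
    exact ((hasDerivAt_const r_c 1).sub h1).sub h2
  have hVder : HasDerivAt V (0 - (-(2 * M) / r_c ^ 2) - Λ * (2 * r_c) / 3) r_c := by
    rw [hVfun]; exact hfder
  have hDfun : D = fun r => (1 - 2 * M / r - Λ * r ^ 2 / 3) + (K * r / 3 - C / r ^ 2) ^ 2 := by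
    funext r; rw [hD r, hV r]
  have hDder : HasDerivAt D
      ((0 - (-(2 * M) / r_c ^ 2) - Λ * (2 * r_c) / 3) +
        2 * (K * r_c / 3 - C / r_c ^ 2) * (K / 3 - (-(C * (2 * r_c)) / (r_c ^ 2) ^ 2))) r_c := by
    rw [hDfun]
    have := hgder.fun_pow 2
    have h := hfder.fun_add this
    refine h.congr_deriv ?_
    norm_num
  have e1 : deriv D r_c = deriv V r_c := by
    rw [hDder.deriv, hVder.deriv, hg0]
    ring
  exact ⟨e1, e1 ▸ hVc'⟩
end

section
/- For any K, C ∈ ℝ (not both making the perturbation vanish identically), the function D(r) = 1 - 2M/r - Λr²/3 + (Kr/3 - C/r²)² has at most three positive zeros counted without multiplicity. -/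
open Set

private lemma quad3 {a b c t1 t2 t3 : ℝ} (h12 : t1 ≠ t2) (h13 : t1 ≠ t3) (h23 : t2 ≠ t3)
    (e1 : a * t1 ^ 2 + b * t1 + c = 0) (e2 : a * t2 ^ 2 + b * t2 + c = 0)
    (e3 : a * t3 ^ 2 + b * t3 + c = 0) : a = 0 ∧ b = 0 ∧ c = 0 := by
  have h1 : a * (t1 + t2) + b = 0 := by
    have h : (t1 - t2) * (a * (t1 + t2) + b) = 0 := by linear_combination e1 - e2
    exact (mul_eq_zero.mp h).resolve_left (sub_ne_zero.mpr h12)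
  have h2 : a * (t2 + t3) + b = 0 := by
    have h : (t2 - t3) * (a * (t2 + t3) + b) = 0 := by linear_combination e2 - e3
    exact (mul_eq_zero.mp h).resolve_left (sub_ne_zero.mpr h23)
  have ha : a = 0 := by
    have h : (t1 - t3) * a = 0 := by linear_combination h1 - h2
    exact (mul_eq_zero.mp h).resolve_left (sub_ne_zero.mpr h13)
  have hb : b = 0 := by linear_combination h1 - (t1 + t2) * ha
  exact ⟨ha, hb, by linear_combination e1 - t1 ^ 2 * ha - t1 * hb⟩

/-- For any K, C (with the transverse-traceless perturbation not identically
zero), D(r) = 1 - 2M/r - Λr²/3 + (Kr/3 - C/r²)² has at most three distinct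
positive zeros. -/
theorem stmt_12 (Λ M K C : ℝ) (hΛ : 0 < Λ) (hKC : K ≠ 0 ∨ C ≠ 0)
    (D : ℝ → ℝ)
    (hD : ∀ r, D r = 1 - 2 * M / r - Λ * r ^ 2 / 3 + (K * r / 3 - C / r ^ 2) ^ 2) :
    {r : ℝ | 0 < r ∧ D r = 0}.encard ≤ 3 := by
  have hDe : D = fun r => 1 - 2 * M / r - Λ * r ^ 2 / 3 + (K * r / 3 - C / r ^ 2) ^ 2 :=
    funext hD
  subst hDe
  set D : ℝ → ℝ := fun r => 1 - 2 * M / r - Λ * r ^ 2 / 3 + (K * r / 3 - C / r ^ 2) ^ 2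
    with hDdef
  set A : ℝ := 2 * K ^ 2 / 9 - 2 * Λ / 3 with hA
  set B : ℝ := 2 * M + 2 * K * C / 3 with hB
  set Cc : ℝ := -4 * C ^ 2 with hCc
  -- derivative of D
  have hderiv : ∀ x : ℝ, x ≠ 0 →
      HasDerivAt D ((A * x ^ 6 + B * x ^ 3 + Cc) / x ^ 5) x := by
    intro x hx
    have hx2 : (x : ℝ) ^ 2 ≠ 0 := pow_ne_zero 2 hx
    have h1 : HasDerivAt (fun r : ℝ => 2 * M / r)
        ((0 * x - 2 * M * 1) / x ^ 2) x :=
      (hasDerivAt_const x (2 * M)).div (hasDerivAt_id x) hx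
    have h2 : HasDerivAt (fun r : ℝ => Λ * r ^ 2 / 3) (Λ * (↑2 * x ^ 1) / 3) x :=
      ((hasDerivAt_pow 2 x).const_mul Λ).div_const 3
    have h3 : HasDerivAt (fun r : ℝ => K * r / 3) (K * 1 / 3) x :=
      ((hasDerivAt_id x).const_mul K).div_const 3
    have h4 : HasDerivAt (fun r : ℝ => C / r ^ 2)
        ((0 * x ^ 2 - C * (↑2 * x ^ 1)) / (x ^ 2) ^ 2) x :=
      (hasDerivAt_const x C).div (hasDerivAt_pow 2 x) hx2
    have h6 := (h3.sub h4).pow 2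
    have h7 := (((hasDerivAt_const x (1:ℝ)).sub h1).sub h2).add h6
    convert h7 using 1
    · rfl
    · rfl
    · rfl
    rw [hA, hB, hCc]
    simp only [Pi.sub_apply, Nat.cast_ofNat, Nat.add_one_sub_one, pow_one]
    field_simp
    ring
  -- contradiction setup
  by_contra hcon
  push_neg at hcon
  have h4le : (4 : ℕ∞) ≤ {r : ℝ | 0 < r ∧ D r = 0}.encard := Order.add_one_le_of_lt hcon
  obtain ⟨t, hts, htc⟩ := Set.exists_subset_encard_eq h4le
  have htf : t.Finite := Set.finite_of_encard_eq_coe htc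
  have hcard : htf.toFinset.card = 4 := by
    have h := htf.encard_eq_coe_toFinset_card
    rw [htc] at h
    exact_mod_cast h.symm
  let e := htf.toFinset.orderIsoOfFin hcard
  have hmem : ∀ i : Fin 4, 0 < (e i : ℝ) ∧ D (e i) = 0 := fun i =>
    hts (htf.mem_toFinset.mp (e i).2)
  have hlt : ∀ i j : Fin 4, i < j → (e i : ℝ) < (e j : ℝ) := fun i j hij => by
    exact_mod_cast e.lt_iff_lt.mpr hij
  -- Rolle between consecutive roots
  have rolle : ∀ i j : Fin 4, i < j →
      ∃ c ∈ Ioo (e i : ℝ) (e j : ℝ), A * c ^ 6 + B * c ^ 3 + Cc = 0 := by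
    intro i j hij
    have hpi := (hmem i).1
    have hij' := hlt i j hij
    have hcont : ContinuousOn D (Icc (e i : ℝ) (e j : ℝ)) := fun x hx =>
      ((hderiv x (lt_of_lt_of_le hpi hx.1).ne').continuousAt).continuousWithinAt
    have hdd : ∀ x ∈ Ioo (e i : ℝ) (e j : ℝ),
        HasDerivAt D ((A * x ^ 6 + B * x ^ 3 + Cc) / x ^ 5) x := fun x hx =>
      hderiv x (lt_trans hpi hx.1).ne'
    obtain ⟨c, hc, hc0⟩ := exists_hasDerivAt_eq_zero hij'
      hcont ((hmem i).2.trans (hmem j).2.symm) hdd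
    refine ⟨c, hc, ?_⟩
    have hcpos : (0 : ℝ) < c := lt_trans hpi hc.1
    rcases div_eq_zero_iff.mp hc0 with h | h
    · exact h
    · exact absurd h (pow_ne_zero 5 hcpos.ne')
  obtain ⟨c1, hc1, e1⟩ := rolle 0 1 (by decide)
  obtain ⟨c2, hc2, e2⟩ := rolle 1 2 (by decide)
  obtain ⟨c3, hc3, e3⟩ := rolle 2 3 (by decide)
  have hc12 : c1 < c2 := lt_trans hc1.2 hc2.1
  have hc23 : c2 < c3 := lt_trans hc2.2 hc3.1
  have hc1p : 0 < c1 := lt_trans (hmem 0).1 hc1.1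
  have hc2p : 0 < c2 := lt_trans hc1p hc12
  have hc3p : 0 < c3 := lt_trans hc2p hc23
  have h12 : c1 ^ 3 ≠ c2 ^ 3 := ne_of_lt (pow_lt_pow_left₀ hc12 hc1p.le (by norm_num))
  have h13 : c1 ^ 3 ≠ c3 ^ 3 :=
    ne_of_lt (pow_lt_pow_left₀ (lt_trans hc12 hc23) hc1p.le (by norm_num))
  have h23 : c2 ^ 3 ≠ c3 ^ 3 := ne_of_lt (pow_lt_pow_left₀ hc23 hc2p.le (by norm_num))
  obtain ⟨hA0, hB0, hC0⟩ := quad3 (a := A) (b := B) (c := Cc) h12 h13 h23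
    (by linear_combination e1) (by linear_combination e2) (by linear_combination e3)
  -- extract C = 0, M = 0, K^2 = 3Λ
  have hC0' : -4 * C ^ 2 = 0 := hCc.symm.trans hC0
  have hC' : C = 0 := by
    have h : C ^ 2 = 0 := by linarith
    exact pow_eq_zero_iff (by norm_num) |>.mp h
  have hB0' : 2 * M + 2 * K * C / 3 = 0 := hB.symm.trans hB0
  have hM : M = 0 := by rw [hC'] at hB0'; linarith
  have hA0' : 2 * K ^ 2 / 9 - 2 * Λ / 3 = 0 := hA.symm.trans hA0
  have hK2 : K ^ 2 = 3 * Λ := by linarith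
  -- now D (e 0) = 1, contradiction
  have h0 := (hmem 0).2
  rw [hDdef] at h0
  simp only [hC', hM] at h0
  have hr := (hmem 0).1
  rw [mul_zero, zero_div, zero_div, sub_zero] at h0
  nlinarith [h0, hK2, sq_nonneg (e (0 : Fin 4) : ℝ)]
end

section
/- Along the curve of constant-radius CMC data, the derivative of the product V(r_m)·D''(r_m) with respect to r_m equals 8·r_m⁻³·(1 - 3M/r_m)², which is strictly positive for r_m > 3M; hence V(r_m)·D''(r_m) is strictly increasing on (r_k, ∞). -/
/-- The closed-form rational function equal to `V(r)·D''(r)` along the CMC curve. -/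
noncomputable def gfun (M Λ : ℝ) : ℝ → ℝ := fun r =>
  (1 - 2 * M / r - Λ * r ^ 2 / 3) * (-4 * M / r ^ 3 - 2 * Λ / 3)
    - 2 * (3 * M - r) ^ 2 / r ^ 4
    - 2 * (1 - 2 * M / r - Λ * r ^ 2 / 3) ^ 2 / r ^ 2

lemma gfun_hasDerivAt (M Λ : ℝ) {x : ℝ} (hx : x ≠ 0) :
    HasDerivAt (gfun M Λ) (8 * x⁻¹ ^ 3 * (1 - 3 * M / x) ^ 2) x := by
  have hA : HasDerivAt (fun r : ℝ => 1 - 2 * M / r - Λ * r ^ 2 / 3)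
      (2 * M / x ^ 2 - 2 * Λ * x / 3) x := by
    have h1 : HasDerivAt (fun r : ℝ => 2 * M / r)
        ((0 * x - 2 * M * 1) / x ^ 2) x :=
      (hasDerivAt_const x (2 * M)).div (hasDerivAt_id' x) hx
    have h2 : HasDerivAt (fun r : ℝ => Λ * r ^ 2 / 3)
        (Λ * ((2 : ℕ) * x ^ (2 - 1)) / 3) x :=
      ((hasDerivAt_pow 2 x).const_mul Λ).div_const 3
    refine (((hasDerivAt_const x (1 : ℝ)).sub h1).sub h2).congr_deriv ?_
    field_simp; ring
  have hB : HasDerivAt (fun r : ℝ => -4 * M / r ^ 3 - 2 * Λ / 3)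
      (12 * M / x ^ 4) x := by
    have h1 : HasDerivAt (fun r : ℝ => -4 * M / r ^ 3)
        ((0 * x ^ 3 - (-4 * M) * ((3 : ℕ) * x ^ (3 - 1))) / (x ^ 3) ^ 2) x :=
      (hasDerivAt_const x (-4 * M)).div (hasDerivAt_pow 3 x) (pow_ne_zero 3 hx)
    refine (h1.sub_const (2 * Λ / 3)).congr_deriv ?_
    field_simp; ring
  have hC : HasDerivAt (fun r : ℝ => 2 * (3 * M - r) ^ 2 / r ^ 4)
      ((2 * ((2 : ℕ) * (3 * M - x) ^ (2 - 1) * (0 - 1)) * x ^ 4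
          - 2 * (3 * M - x) ^ 2 * ((4 : ℕ) * x ^ (4 - 1))) / (x ^ 4) ^ 2) x :=
    ((((hasDerivAt_const x (3 * M)).sub (hasDerivAt_id' x)).pow 2).const_mul 2).div
      (hasDerivAt_pow 4 x) (pow_ne_zero 4 hx)
  have hD : HasDerivAt
      (fun r : ℝ => 2 * (1 - 2 * M / r - Λ * r ^ 2 / 3) ^ 2 / r ^ 2)
      ((2 * ((2 : ℕ) * (1 - 2 * M / x - Λ * x ^ 2 / 3) ^ (2 - 1)
          * (2 * M / x ^ 2 - 2 * Λ * x / 3)) * x ^ 2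
          - 2 * (1 - 2 * M / x - Λ * x ^ 2 / 3) ^ 2 * ((2 : ℕ) * x ^ (2 - 1)))
        / (x ^ 2) ^ 2) x :=
    ((hA.pow 2).const_mul 2).div (hasDerivAt_pow 2 x) (pow_ne_zero 2 hx)
  have htot := ((hA.mul hB).sub hC).sub hD
  refine htot.congr_deriv ?_
  norm_num only [Nat.cast_ofNat]
  field_simp
  ring

/-- First-derivative computation for the inner function with frozen `a`, `b`. -/
lemma inner_hasDerivAt (M Λ a b : ℝ) {x : ℝ} (hx : x ≠ 0) :
    HasDerivAt (fun r : ℝ => 1 - 2 * M / r - Λ * r ^ 2 / 3 + (a * r / 3 - b / r ^ 2) ^ 2)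
      (2 * M / x ^ 2 - 2 * Λ * x / 3 + 2 * ((a * x / 3 - b / x ^ 2) * (a / 3 + 2 * b / x ^ 3))) x := by
  have h1 : HasDerivAt (fun r : ℝ => 2 * M / r)
      ((0 * x - 2 * M * 1) / x ^ 2) x :=
    (hasDerivAt_const x (2 * M)).div (hasDerivAt_id' x) hx
  have h2 : HasDerivAt (fun r : ℝ => Λ * r ^ 2 / 3)
      (Λ * ((2 : ℕ) * x ^ (2 - 1)) / 3) x :=
    ((hasDerivAt_pow 2 x).const_mul Λ).div_const 3
  have t1 : HasDerivAt (fun r : ℝ => a * r / 3) (a * 1 / 3) x :=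
    ((hasDerivAt_id' x).const_mul a).div_const 3
  have t2 : HasDerivAt (fun r : ℝ => b / r ^ 2)
      ((0 * x ^ 2 - b * ((2 : ℕ) * x ^ (2 - 1))) / (x ^ 2) ^ 2) x :=
    (hasDerivAt_const x b).div (hasDerivAt_pow 2 x) (pow_ne_zero 2 hx)
  have hu := (t1.sub t2).pow 2
  refine ((((hasDerivAt_const x (1 : ℝ)).sub h1).sub h2).add hu).congr_deriv ?_
  simp only [Pi.sub_apply, Pi.add_apply]
  norm_num only [Nat.cast_ofNat]
  field_simp; ring

/-- Second-derivative computation. -/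
lemma inner2_hasDerivAt (M Λ a b : ℝ) {x : ℝ} (hx : x ≠ 0) :
    HasDerivAt (fun r : ℝ => 2 * M / r ^ 2 - 2 * Λ * r / 3
        + 2 * ((a * r / 3 - b / r ^ 2) * (a / 3 + 2 * b / r ^ 3)))
      (-4 * M / x ^ 3 - 2 * Λ / 3
        + 2 * ((a / 3 + 2 * b / x ^ 3) ^ 2
          + (a * x / 3 - b / x ^ 2) * (-6 * b / x ^ 4))) x := by
  have p1 : HasDerivAt (fun r : ℝ => 2 * M / r ^ 2)
      ((0 * x ^ 2 - 2 * M * ((2 : ℕ) * x ^ (2 - 1))) / (x ^ 2) ^ 2) x :=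
    (hasDerivAt_const x (2 * M)).div (hasDerivAt_pow 2 x) (pow_ne_zero 2 hx)
  have p2 : HasDerivAt (fun r : ℝ => 2 * Λ * r / 3) (2 * Λ * 1 / 3) x :=
    ((hasDerivAt_id' x).const_mul (2 * Λ)).div_const 3
  have t1 : HasDerivAt (fun r : ℝ => a * r / 3) (a * 1 / 3) x :=
    ((hasDerivAt_id' x).const_mul a).div_const 3
  have t2 : HasDerivAt (fun r : ℝ => b / r ^ 2)
      ((0 * x ^ 2 - b * ((2 : ℕ) * x ^ (2 - 1))) / (x ^ 2) ^ 2) x :=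
    (hasDerivAt_const x b).div (hasDerivAt_pow 2 x) (pow_ne_zero 2 hx)
  have t4 : HasDerivAt (fun r : ℝ => 2 * b / r ^ 3)
      ((0 * x ^ 3 - 2 * b * ((3 : ℕ) * x ^ (3 - 1))) / (x ^ 3) ^ 2) x :=
    (hasDerivAt_const x (2 * b)).div (hasDerivAt_pow 3 x) (pow_ne_zero 3 hx)
  have hw := ((t1.sub t2).mul ((hasDerivAt_const x (a / 3)).add t4)).const_mul 2
  refine ((p1.sub p2).add hw).congr_deriv ?_
  simp only [Pi.sub_apply, Pi.add_apply]
  field_simp; ring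

/-- Along the curve of constant-radius CMC data, the derivative of
r_m ↦ V(r_m)·D''(r_m) equals 8·r_m⁻³·(1 - 3M/r_m)², which is positive for
r_m > 3M; hence V(r_m)·D''(r_m) is strictly increasing on (r_k, ∞). -/
theorem stmt_13 (Λ M : ℝ) (hΛ : 0 < Λ) (hM : 0 < M) (h9 : 9 * M ^ 2 * Λ < 1)
    (V : ℝ → ℝ) (hV : ∀ r, V r = 1 - 2 * M / r - Λ * r ^ 2 / 3)
    (r_c : ℝ) (hc : 0 < r_c) (hVc : V r_c = 0)
    (hlarger : ∀ r, r_c < r → V r < 0)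
    (r_k : ℝ) (hk : r_c < r_k)
    (hrk : r_k ^ 2 * V r_k + (3 * M - r_k) ^ 2 = 0)
    (Km Cm : ℝ → ℝ)
    (hKm : ∀ r, Km r = (3 * M - r) / (r ^ 2 * Real.sqrt (-V r)) -
      (3 / r) * Real.sqrt (-V r))
    (hCm : ∀ r, Cm r = (r / 3) * (3 * M - r) / Real.sqrt (-V r))
    (F : ℝ → ℝ)
    (hF : ∀ rm, F rm =
      V rm * deriv (deriv (fun r => V r + (Km rm * r / 3 - Cm rm / r ^ 2) ^ 2)) rm) :
    (∀ rm, r_c < rm → deriv F rm = 8 * rm⁻¹ ^ 3 * (1 - 3 * M / rm) ^ 2) ∧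
    (∀ rm, 3 * M < rm → 0 < 8 * rm⁻¹ ^ 3 * (1 - 3 * M / rm) ^ 2) ∧
    StrictMonoOn F (Set.Ioi r_k) := by
  -- Key reduction: F agrees with the rational function gfun on (r_c, ∞).
  have hFg : ∀ rm, r_c < rm → F rm = gfun M Λ rm := by
    intro rm hrm
    have h0 : (0:ℝ) < rm := lt_trans hc hrm
    have hrm0 : rm ≠ 0 := ne_of_gt h0
    have hW : 0 < -V rm := by have := hlarger rm hrm; linarith
    set s := Real.sqrt (-V rm) with hs_def
    have hs0 : 0 < s := Real.sqrt_pos.2 hW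
    have hs0' : s ≠ 0 := ne_of_gt hs0
    have hs2 : s ^ 2 = -V rm := Real.sq_sqrt hW.le
    have hVs : V rm = -s ^ 2 := by linarith
    set a := Km rm with ha_def
    set b := Cm rm with hb_def
    have ha : a = (3 * M - rm) / (rm ^ 2 * s) - (3 / rm) * s := by
      rw [ha_def, hKm]
    have hb : b = (rm / 3) * (3 * M - rm) / s := by
      rw [hb_def, hCm]
    have hfun : (fun r => V r + (a * r / 3 - b / r ^ 2) ^ 2)
        = (fun r : ℝ => 1 - 2 * M / r - Λ * r ^ 2 / 3 + (a * r / 3 - b / r ^ 2) ^ 2) :=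
      funext fun r => by rw [hV]
    have key1 : deriv (fun r => V r + (a * r / 3 - b / r ^ 2) ^ 2)
        =ᶠ[nhds rm] (fun x : ℝ => 2 * M / x ^ 2 - 2 * Λ * x / 3
          + 2 * ((a * x / 3 - b / x ^ 2) * (a / 3 + 2 * b / x ^ 3))) := by
      filter_upwards [Ioi_mem_nhds h0] with x hx
      rw [hfun]
      exact (inner_hasDerivAt M Λ a b (ne_of_gt hx)).deriv
    rw [hF, key1.deriv_eq, (inner2_hasDerivAt M Λ a b hrm0).deriv]
    unfold gfun
    rw [show (1 - 2 * M / rm - Λ * rm ^ 2 / 3 : ℝ) = -s ^ 2 by rw [← hV rm]; exact hVs]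
    rw [ha, hb, hVs]
    field_simp
    ring
  have hderivF : ∀ rm, r_c < rm → deriv F rm = 8 * rm⁻¹ ^ 3 * (1 - 3 * M / rm) ^ 2 := by
    intro rm hrm
    have h0 : (0:ℝ) < rm := lt_trans hc hrm
    have hev : F =ᶠ[nhds rm] gfun M Λ := by
      filter_upwards [Ioi_mem_nhds hrm] with x hx
      exact hFg x hx
    rw [hev.deriv_eq, (gfun_hasDerivAt M Λ (ne_of_gt h0)).deriv]
  have hpos : ∀ rm, 3 * M < rm → 0 < 8 * rm⁻¹ ^ 3 * (1 - 3 * M / rm) ^ 2 := by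
    intro rm h3m
    have h0 : (0:ℝ) < rm := lt_trans (by positivity) h3m
    have h1 : 0 < 1 - 3 * M / rm := by
      rw [sub_pos, div_lt_one h0]; exact h3m
    positivity
  refine ⟨hderivF, hpos, ?_⟩
  -- 3M ≤ r_c since V(3M) > 0.
  have h3c : 3 * M ≤ r_c := by
    by_contra hcon
    push_neg at hcon
    have hV3M : V (3 * M) < 0 := hlarger _ hcon
    rw [hV] at hV3M
    have hM0 : (3 * M) ≠ 0 := by positivity
    rw [show 2 * M / (3 * M) = 2 / 3 by field_simp] at hV3M
    nlinarith
  apply strictMonoOn_of_deriv_pos (convex_Ioi r_k)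
  · intro x hx
    have hx' : r_c < x := lt_trans hk hx
    have hx0 : x ≠ 0 := ne_of_gt (lt_trans hc hx')
    have hev : F =ᶠ[nhds x] gfun M Λ := by
      filter_upwards [Ioi_mem_nhds hx'] with y hy
      exact hFg y hy
    exact ((gfun_hasDerivAt M Λ hx0).continuousAt.congr hev.symm).continuousWithinAt
  · intro x hx
    rw [interior_Ioi] at hx
    have hx' : r_c < x := lt_trans hk hx
    rw [hderivF x hx']
    exact hpos x (lt_of_le_of_lt h3c hx')
end

section
/- Along the curve of constant-radius CMC data one has the identity D''(r_m) = (2/3)·V(r_m)⁻¹·(Λ - 3r_m⁻⁴·[(r_m - 3M)² + r_m(r_m - 2M)]); consequently V(r_m)·D''(r_m) → 2Λ/3 and hence T_m(r_m) := √2·π·(V(r_m)·D''(r_m))^{-1/2} → √(3/Λ)·π as r_m → ∞. -/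
open Filter Real

set_option maxHeartbeats 1000000 in
/-- Along the curve of constant-radius CMC data,
D''(r_m) = (2/3)·V(r_m)⁻¹·(Λ - 3r_m⁻⁴·[(r_m - 3M)² + r_m(r_m - 2M)]); hence
V(r_m)·D''(r_m) → 2Λ/3 and T_m(r_m) → √(3/Λ)·π as r_m → ∞. -/
theorem stmt_14 (Λ M : ℝ) (hΛ : 0 < Λ) (hM : 0 < M) (h9 : 9 * M ^ 2 * Λ < 1)
    (V : ℝ → ℝ) (hV : ∀ r, V r = 1 - 2 * M / r - Λ * r ^ 2 / 3)
    (r_c : ℝ) (hc : 0 < r_c) (hVc : V r_c = 0)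
    (hlarger : ∀ r, r_c < r → V r < 0)
    (Km Cm : ℝ → ℝ)
    (hKm : ∀ r, Km r = (3 * M - r) / (r ^ 2 * Real.sqrt (-V r)) -
      (3 / r) * Real.sqrt (-V r))
    (hCm : ∀ r, Cm r = (r / 3) * (3 * M - r) / Real.sqrt (-V r))
    (D'' : ℝ → ℝ)
    (hD'' : ∀ rm, D'' rm =
      deriv (deriv (fun r => V r + (Km rm * r / 3 - Cm rm / r ^ 2) ^ 2)) rm) :
    (∀ rm, r_c < rm → D'' rm = (2 / 3) * (V rm)⁻¹ *
      (Λ - 3 * rm⁻¹ ^ 4 * ((rm - 3 * M) ^ 2 + rm * (rm - 2 * M)))) ∧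
    Tendsto (fun rm => V rm * D'' rm) atTop (nhds (2 * Λ / 3)) ∧
    Tendsto (fun rm => Real.sqrt 2 * π * (Real.sqrt (V rm * D'' rm))⁻¹) atTop
      (nhds (Real.sqrt (3 / Λ) * π)) := by
  have hVfun : V = fun r => 1 - 2 * M / r - Λ * r ^ 2 / 3 := funext hV
  have key : ∀ rm, r_c < rm → D'' rm = (2 / 3) * (V rm)⁻¹ *
      (Λ - 3 * rm⁻¹ ^ 4 * ((rm - 3 * M) ^ 2 + rm * (rm - 2 * M))) := by
    intro rm hrm
    have hr0 : 0 < rm := hc.trans hrm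
    have hr : rm ≠ 0 := hr0.ne'
    have hVneg : V rm < 0 := hlarger rm hrm
    set s := Real.sqrt (-V rm) with hsdef
    have hs0 : 0 < s := Real.sqrt_pos.2 (by linarith)
    have hs : s ≠ 0 := hs0.ne'
    have hs2 : s ^ 2 = -V rm := Real.sq_sqrt (by linarith)
    set a := Km rm with hadef
    set b := Cm rm with hbdef
    have ha : a = (3 * M - rm) / (rm ^ 2 * s) - (3 / rm) * s := by
      rw [hadef, hKm rm]
    have hb : b = (rm / 3) * (3 * M - rm) / s := by
      rw [hbdef, hCm rm]
    -- first derivative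
    have h1 : ∀ r : ℝ, r ≠ 0 →
        HasDerivAt (fun r => V r + (a * r / 3 - b / r ^ 2) ^ 2)
        (2 * M / r ^ 2 - 2 * Λ * r / 3 +
          2 * ((a * r / 3 - b / r ^ 2) * (a / 3 + 2 * b / r ^ 3))) r := by
      intro r hrne
      have hr2 : (r : ℝ) ^ 2 ≠ 0 := pow_ne_zero _ hrne
      have hV' : HasDerivAt (fun r : ℝ => 1 - 2 * M / r - Λ * r ^ 2 / 3)
          (2 * M / r ^ 2 - 2 * Λ * r / 3) r := by
        have h₁ : HasDerivAt (fun r : ℝ => 2 * M * r⁻¹) (2 * M * (-(r ^ 2)⁻¹)) r :=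
          (hasDerivAt_inv hrne).const_mul (2 * M)
        have h₂ : HasDerivAt (fun r : ℝ => Λ * r ^ 2 / 3)
            (Λ * ((2 : ℕ) * r ^ 1) / 3) r :=
          ((hasDerivAt_pow 2 r).const_mul Λ).div_const 3
        have h := ((hasDerivAt_const r (1:ℝ)).sub h₁).sub h₂
        have hfun : (fun r : ℝ => 1 - 2 * M * r⁻¹ - Λ * r ^ 2 / 3)
            = fun r : ℝ => 1 - 2 * M / r - Λ * r ^ 2 / 3 := by
          funext x; ring
        simp only [Pi.sub_def] at h
        rw [hfun] at h
        refine h.congr_deriv ?_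
        push_cast
        field_simp
        ring
      have hg : ∀ x : ℝ, x ≠ 0 → HasDerivAt (fun r : ℝ => a * r / 3 - b / r ^ 2)
          (a / 3 + 2 * b / x ^ 3) x := by
        intro x hx
        have hx2 : (x : ℝ) ^ 2 ≠ 0 := pow_ne_zero _ hx
        have h₁ : HasDerivAt (fun r : ℝ => a * r / 3) (a * 1 / 3) x :=
          ((hasDerivAt_id x).const_mul a).div_const 3
        have h₂ : HasDerivAt (fun r : ℝ => b * (r ^ 2)⁻¹)
            (b * (-((2 : ℕ) * x ^ 1) / (x ^ 2) ^ 2)) x :=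
          ((hasDerivAt_pow 2 x).inv hx2).const_mul b
        have hfun : (fun r : ℝ => a * r / 3 - b * (r ^ 2)⁻¹)
            = fun r : ℝ => a * r / 3 - b / r ^ 2 := by
          funext y; ring
        have h := h₁.sub h₂
        simp only [Pi.sub_def] at h
        rw [hfun] at h
        refine h.congr_deriv ?_
        push_cast
        field_simp
        ring
      have hsq := (hg r hrne).pow 2
      rw [hVfun]
      refine (hV'.add hsq).congr_deriv ?_
      push_cast
      ring
    have hgr : ∀ x : ℝ, x ≠ 0 → HasDerivAt (fun r : ℝ => a * r / 3 - b / r ^ 2)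
        (a / 3 + 2 * b / x ^ 3) x := by
      intro x hx
      have hx2 : (x : ℝ) ^ 2 ≠ 0 := pow_ne_zero _ hx
      have h₁ : HasDerivAt (fun r : ℝ => a * r / 3) (a * 1 / 3) x :=
        ((hasDerivAt_id x).const_mul a).div_const 3
      have h₂ : HasDerivAt (fun r : ℝ => b * (r ^ 2)⁻¹)
          (b * (-((2 : ℕ) * x ^ 1) / (x ^ 2) ^ 2)) x :=
        ((hasDerivAt_pow 2 x).inv hx2).const_mul b
      have hfun : (fun r : ℝ => a * r / 3 - b * (r ^ 2)⁻¹)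
          = fun r : ℝ => a * r / 3 - b / r ^ 2 := by
        funext y; ring
      have h := h₁.sub h₂
      simp only [Pi.sub_def] at h
      rw [hfun] at h
      refine h.congr_deriv ?_
      push_cast
      field_simp
      ring
    -- deriv f agrees with the explicit first derivative near rm
    have hf1 : deriv (fun r => V r + (a * r / 3 - b / r ^ 2) ^ 2)
        =ᶠ[nhds rm] (fun r => 2 * M / r ^ 2 - 2 * Λ * r / 3 +
          2 * ((a * r / 3 - b / r ^ 2) * (a / 3 + 2 * b / r ^ 3))) := by
      filter_upwards [eventually_ne_nhds hr] with r hrne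
      exact (h1 r hrne).deriv
    -- second derivative
    have h2 : HasDerivAt (fun r : ℝ => 2 * M / r ^ 2 - 2 * Λ * r / 3 +
          2 * ((a * r / 3 - b / r ^ 2) * (a / 3 + 2 * b / r ^ 3)))
        (-4 * M / rm ^ 3 - 2 * Λ / 3 +
          2 * ((a / 3 + 2 * b / rm ^ 3) * (a / 3 + 2 * b / rm ^ 3) +
            (a * rm / 3 - b / rm ^ 2) * (-6 * b / rm ^ 4))) rm := by
      have hr2 : (rm : ℝ) ^ 2 ≠ 0 := pow_ne_zero _ hr
      have hr3 : (rm : ℝ) ^ 3 ≠ 0 := pow_ne_zero _ hr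
      have h₁ : HasDerivAt (fun r : ℝ => 2 * M * (r ^ 2)⁻¹)
          (2 * M * (-((2 : ℕ) * rm ^ 1) / (rm ^ 2) ^ 2)) rm :=
        ((hasDerivAt_pow 2 rm).inv hr2).const_mul (2 * M)
      have h₂ : HasDerivAt (fun r : ℝ => 2 * Λ * r / 3) (2 * Λ * 1 / 3) rm :=
        ((hasDerivAt_id rm).const_mul (2 * Λ)).div_const 3
      have hh : HasDerivAt (fun r : ℝ => a / 3 + 2 * b * (r ^ 3)⁻¹)
          (0 + 2 * b * (-((3 : ℕ) * rm ^ 2) / (rm ^ 3) ^ 2)) rm :=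
        (hasDerivAt_const rm (a / 3)).add
          (((hasDerivAt_pow 3 rm).inv hr3).const_mul (2 * b))
      have hhfun : (fun r : ℝ => a / 3 + 2 * b * (r ^ 3)⁻¹)
          = fun r : ℝ => a / 3 + 2 * b / r ^ 3 := by
        funext y; ring
      rw [hhfun] at hh
      have hprod := ((hgr rm hr).mul hh).const_mul 2
      have hfun2 : (fun r : ℝ => 2 * M * (r ^ 2)⁻¹)
          = fun r : ℝ => 2 * M / r ^ 2 := by
        funext y; ring
      rw [hfun2] at h₁
      refine ((h₁.sub h₂).add hprod).congr_deriv ?_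
      push_cast
      field_simp
      ring
    have hD2 : D'' rm = -4 * M / rm ^ 3 - 2 * Λ / 3 +
          2 * ((a / 3 + 2 * b / rm ^ 3) * (a / 3 + 2 * b / rm ^ 3) +
            (a * rm / 3 - b / rm ^ 2) * (-6 * b / rm ^ 4)) := by
      rw [hD'' rm, ← hadef, ← hbdef, hf1.deriv_eq]
      exact h2.deriv
    -- algebra
    have hVs : V rm = -s ^ 2 := by linarith
    have hΛeq : Λ = 3 * (s ^ 2 + 1) / rm ^ 2 - 6 * M / rm ^ 3 := by
      have h := hs2
      rw [hV rm] at h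
      field_simp at h ⊢
      linear_combination (-1 : ℝ) * h
    rw [hD2, ha, hb, hVs, hΛeq]
    field_simp
    ring
  refine ⟨key, ?_, ?_⟩
  · -- limit of V * D''
    have hVD : (fun rm => V rm * D'' rm) =ᶠ[atTop] fun rm =>
        2 * Λ / 3 - 4 * (rm⁻¹) ^ 2 + 16 * M * (rm⁻¹) ^ 3 - 18 * M ^ 2 * (rm⁻¹) ^ 4 := by
      filter_upwards [eventually_gt_atTop r_c, eventually_gt_atTop (0 : ℝ)] with rm h1 h2
      have hVne : V rm ≠ 0 := (hlarger rm h1).ne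
      rw [key rm h1]
      field_simp
      ring
    have htend : Tendsto (fun rm : ℝ => 2 * Λ / 3 - 4 * (rm⁻¹) ^ 2
        + 16 * M * (rm⁻¹) ^ 3 - 18 * M ^ 2 * (rm⁻¹) ^ 4) atTop (nhds (2 * Λ / 3)) := by
      have hcont : Continuous (fun x : ℝ => 2 * Λ / 3 - 4 * x ^ 2
          + 16 * M * x ^ 3 - 18 * M ^ 2 * x ^ 4) := by continuity
      have h := (hcont.tendsto 0).comp tendsto_inv_atTop_zero
      simp only [Function.comp_def] at h
      norm_num at h
      convert h using 2 <;> ring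
    exact Tendsto.congr' hVD.symm htend
  · -- limit of T_m
    have hVDt : Tendsto (fun rm => V rm * D'' rm) atTop (nhds (2 * Λ / 3)) := by
      have hVD : (fun rm => V rm * D'' rm) =ᶠ[atTop] fun rm =>
          2 * Λ / 3 - 4 * (rm⁻¹) ^ 2 + 16 * M * (rm⁻¹) ^ 3 - 18 * M ^ 2 * (rm⁻¹) ^ 4 := by
        filter_upwards [eventually_gt_atTop r_c, eventually_gt_atTop (0 : ℝ)] with rm h1 h2
        have hVne : V rm ≠ 0 := (hlarger rm h1).ne
        rw [key rm h1]
        field_simp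
        ring
      have htend : Tendsto (fun rm : ℝ => 2 * Λ / 3 - 4 * (rm⁻¹) ^ 2
          + 16 * M * (rm⁻¹) ^ 3 - 18 * M ^ 2 * (rm⁻¹) ^ 4) atTop (nhds (2 * Λ / 3)) := by
        have hcont : Continuous (fun x : ℝ => 2 * Λ / 3 - 4 * x ^ 2
            + 16 * M * x ^ 3 - 18 * M ^ 2 * x ^ 4) := by continuity
        have h := (hcont.tendsto 0).comp tendsto_inv_atTop_zero
        simp only [Function.comp_def] at h
        norm_num at h
        convert h using 2 <;> ring
      exact Tendsto.congr' hVD.symm htend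
    have hL : (0 : ℝ) < 2 * Λ / 3 := by linarith
    have hsL : Real.sqrt (2 * Λ / 3) ≠ 0 := (Real.sqrt_pos.2 hL).ne'
    have h3 : Tendsto (fun y : ℝ => Real.sqrt 2 * π * (Real.sqrt y)⁻¹) (nhds (2 * Λ / 3))
        (nhds (Real.sqrt 2 * π * (Real.sqrt (2 * Λ / 3))⁻¹)) :=
      ((Real.continuous_sqrt.tendsto _).inv₀ hsL).const_mul _
    have heq : Real.sqrt 2 * π * (Real.sqrt (2 * Λ / 3))⁻¹ = Real.sqrt (3 / Λ) * π := by
      have h1 : Real.sqrt (3 / Λ) * Real.sqrt (2 * Λ / 3) = Real.sqrt 2 := by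
        rw [← Real.sqrt_mul (by positivity)]
        congr 1
        field_simp
      rw [← h1]
      field_simp
    rw [heq] at h3
    exact h3.comp hVDt
end
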